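/- Let G be a finite abelian p-group with cyclic decomposition of exponents I(G) = {n₁,…,n_{t−s}, k₁,…,k_s}, and let g ∈ G be an element of order p^l put in the normal form g = (0,…,0, p^{k₁−r₁},…, p^{k_s−r_s}) with r_s = l and the conditions of the normal form (k_i increasing, r_i increasing, k_i − r_i strictly increasing, 0 ≤ k₁ − r₁). Then I(G) ∩ I(G/⟨g⟩) = {n₁, …, n_{t−s}}, i.e., the common part of the exponent multisets of G and G/⟨g⟩ consists exactly of the exponents not involved in the normal form of g. -/

import Mathlib

noncomputable def cmul (N M c : ℕ) (h : ((N * c : ℕ) : ZMod M) = 0) : ZMod N →+ ZMod M :=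
  ZMod.lift N ⟨zmultiplesHom (ZMod M) (c : ZMod M), by
    simpa [zmultiplesHom_apply, zsmul_eq_mul, ← Nat.cast_mul] using h⟩

theorem cmul_natCast (N M c : ℕ) (h : ((N * c : ℕ) : ZMod M) = 0) (a : ℕ) :
    cmul N M c h (a : ZMod N) = ((a * c : ℕ) : ZMod M) := by
  have h1 : ((a : ℤ) : ZMod N) = (a : ZMod N) := by push_cast; rfl
  rw [← h1, cmul, ZMod.lift_coe]
  simp [zmultiplesHom_apply, zsmul_eq_mul, ← Nat.cast_mul]

def mm (k r : ℕ → ℕ) : ℕ → ℕ := fun i => if i = 0 then k 0 - r 0 else k i - r i + r (i - 1)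

noncomputable def FF (p : ℕ) (k r : ℕ → ℕ) : ∀ j : ℕ, ((∀ i : ℕ, ZMod (p ^ k i)) →+ ZMod (p ^ mm k r j))
  | 0 => if h : (p ^ mm k r 0 ∣ p ^ k 0) then
      ((ZMod.castHom h (ZMod (p ^ mm k r 0))).toAddMonoidHom.comp (Pi.evalAddMonoidHom _ 0)) else 0
  | (j+1) => (if h : (p ^ mm k r (j+1) ∣ p ^ k (j+1)) then
      ((ZMod.castHom h (ZMod (p ^ mm k r (j+1)))).toAddMonoidHom.comp (Pi.evalAddMonoidHom _ (j+1))) else 0)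
      - (if hc : ((p ^ k j * p ^ ((k (j+1) - r (j+1)) - (k j - r j)) : ℕ) : ZMod (p ^ mm k r (j+1))) = 0
          then (cmul _ _ _ hc).comp (Pi.evalAddMonoidHom _ j) else 0)

noncomputable def xx (p s : ℕ) (k r : ℕ → ℕ) (y : ∀ i : Fin s, ZMod (p ^ mm k r i.1)) : ∀ j : ℕ, ZMod (p ^ k j)
  | 0 => if h : 0 < s then (((y ⟨0, h⟩).val : ℕ) : ZMod (p ^ k 0)) else 0
  | (j+1) => if h : j + 1 < s then
      (((y ⟨j+1, h⟩ + (if hc : ((p ^ k j * p ^ ((k (j+1) - r (j+1)) - (k j - r j)) : ℕ) : ZMod (p ^ mm k r (j+1))) = 0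
          then cmul _ _ _ hc else 0) (xx p s k r y j)).val : ℕ) : ZMod (p ^ k (j+1)))
      else 0

theorem psi_exists (p : ℕ) (hp : p.Prime) (s : ℕ) (hs : 0 < s) (k r : ℕ → ℕ)
    (hr0 : ∀ i < s, 0 < r i) (hrk : ∀ i < s, r i ≤ k i)
    (hr : ∀ i, i + 1 < s → r i < r (i + 1))
    (hkr : ∀ i, i + 1 < s → k i - r i < k (i + 1) - r (i + 1)) :
    ∃ ψ : (∀ i : Fin s, ZMod (p ^ k i.1)) →+ (∀ i : Fin s, ZMod (p ^ mm k r i.1)),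
      ψ (fun i : Fin s => ((p ^ (k i.1 - r i.1) : ℕ) : ZMod (p ^ k i.1))) = 0 ∧
      Function.Surjective ψ := by
  have hmm0 : mm k r 0 = k 0 - r 0 := by simp [mm]
  have hmms : ∀ j, mm k r (j+1) = k (j+1) - r (j+1) + r j := by intro j; simp [mm]
  have hmle : ∀ j, j < s → mm k r j ≤ k j := by
    intro j hj
    cases j with
    | zero => rw [hmm0]; omega
    | succ i =>
        have h1 := hrk (i+1) hj
        have h2 := hr i hj
        rw [hmms]; omega
  have hdd : ∀ j, j + 1 < s → k j + ((k (j+1) - r (j+1)) - (k j - r j)) = mm k r (j+1) := by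
    intro j hj
    have h1 := hkr j hj
    have h2 := hrk j (by omega)
    have h3 := hrk (j+1) hj
    have h4 := hr j hj
    rw [hmms]; omega
  have hcc : ∀ j, j + 1 < s →
      ((p ^ k j * p ^ ((k (j+1) - r (j+1)) - (k j - r j)) : ℕ) : ZMod (p ^ mm k r (j+1))) = 0 := by
    intro j hj
    rw [← pow_add, hdd j hj]
    exact ZMod.natCast_self _
  have hdvd : ∀ j, j < s → p ^ mm k r j ∣ p ^ k j := fun j hj => pow_dvd_pow p (hmle j hj)
  refine ⟨AddMonoidHom.mk' (fun x i => FF p k r i.1 (fun j => if h : j < s then x ⟨j, h⟩ else 0)) ?_, ?_, ?_⟩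
  · intro a b
    funext i
    show FF p k r i.1 (fun j => if h : j < s then (a + b) ⟨j, h⟩ else 0) =
      FF p k r i.1 (fun j => if h : j < s then a ⟨j, h⟩ else 0) +
      FF p k r i.1 (fun j => if h : j < s then b ⟨j, h⟩ else 0)
    have he : (fun j => if h : j < s then (a + b) ⟨j, h⟩ else 0 : ∀ j : ℕ, ZMod (p ^ k j)) =
        fun j => (if h : j < s then a ⟨j, h⟩ else 0 : ZMod (p ^ k j)) +
          (if h : j < s then b ⟨j, h⟩ else 0 : ZMod (p ^ k j)) := by
      funext j; by_cases h : j < s <;> simp [h]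
    rw [he]
    exact map_add _ _ _
  · funext i
    obtain ⟨i, hi⟩ := i
    cases i with
    | zero =>
        show FF p k r 0
          (fun j => if h : j < s then ((p ^ (k j - r j) : ℕ) : ZMod (p ^ k j)) else 0) = 0
        simp only [FF]
        rw [dif_pos (hdvd 0 hs)]
        simp only [AddMonoidHom.coe_comp, RingHom.toAddMonoidHom_eq_coe, AddMonoidHom.coe_coe,
          Function.comp_apply, Pi.evalAddMonoidHom_apply]
        rw [dif_pos hs, map_natCast]
        rw [hmm0]
        exact ZMod.natCast_self _
    | succ j =>
        show FF p k r (j+1)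
          (fun j' => if h : j' < s then ((p ^ (k j' - r j') : ℕ) : ZMod (p ^ k j')) else 0) = 0
        simp only [FF]
        rw [dif_pos (hdvd (j+1) hi), dif_pos (hcc j hi)]
        simp only [AddMonoidHom.sub_apply, AddMonoidHom.coe_comp, RingHom.toAddMonoidHom_eq_coe,
          AddMonoidHom.coe_coe, Function.comp_apply, Pi.evalAddMonoidHom_apply]
        rw [dif_pos hi, dif_pos (by omega : j < s), map_natCast, cmul_natCast]
        rw [← pow_add]
        have heq : (k j - r j) + ((k (j+1) - r (j+1)) - (k j - r j)) = k (j+1) - r (j+1) := by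
          have := hkr j hi
          omega
        rw [heq, sub_self]
  · intro y
    haveI : ∀ N : ℕ, NeZero (p ^ N) := fun N => ⟨pow_ne_zero _ hp.ne_zero⟩
    refine ⟨fun i => xx p s k r y i.1, ?_⟩
    funext i
    obtain ⟨i, hi⟩ := i
    cases i with
    | zero =>
        show FF p k r 0 (fun j => if h : j < s then xx p s k r y j else 0) = y ⟨0, hi⟩
        simp only [FF]
        rw [dif_pos (hdvd 0 hs)]
        simp only [AddMonoidHom.coe_comp, RingHom.toAddMonoidHom_eq_coe, AddMonoidHom.coe_coe,
          Function.comp_apply, Pi.evalAddMonoidHom_apply]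
        rw [dif_pos hs]
        show (ZMod.castHom (hdvd 0 hs) (ZMod (p ^ mm k r 0))) (xx p s k r y 0) = y ⟨0, hi⟩
        simp only [xx]
        rw [dif_pos hs, map_natCast]
        exact ZMod.natCast_rightInverse _
    | succ j =>
        show FF p k r (j+1) (fun j' => if h : j' < s then xx p s k r y j' else 0) = y ⟨j+1, hi⟩
        simp only [FF]
        rw [dif_pos (hdvd (j+1) hi), dif_pos (hcc j hi)]
        simp only [AddMonoidHom.sub_apply, AddMonoidHom.coe_comp, RingHom.toAddMonoidHom_eq_coe,
          AddMonoidHom.coe_coe, Function.comp_apply, Pi.evalAddMonoidHom_apply]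
        rw [dif_pos hi, dif_pos (by omega : j < s)]
        show (ZMod.castHom (hdvd (j+1) hi) (ZMod (p ^ mm k r (j+1)))) (xx p s k r y (j+1))
            - cmul _ _ _ (hcc j hi) (xx p s k r y j) = y ⟨j+1, hi⟩
        conv_lhs => rw [xx]
        rw [dif_pos hi, dif_pos (hcc j hi), map_natCast]
        rw [ZMod.natCast_rightInverse _]
        exact add_sub_cancel_right _ _
/-- Let `G = (⊕ᵢ ℤ/p^{nᵢ}) ⊕ (⊕ᵢ ℤ/p^{kᵢ})` and let
`g = (0, (p^{kᵢ−rᵢ})ᵢ)` be in normal form (`0 < rᵢ ≤ kᵢ`, `r_s = l`, `kᵢ` increasing,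
`rᵢ` increasing, `kᵢ − rᵢ` strictly increasing).  Then `G ⧸ ⟨g⟩` is isomorphic to
`(⊕ᵢ ℤ/p^{nᵢ}) ⊕ (ℤ/p^{k₁−r₁} ⊕ ⊕_{i≥2} ℤ/p^{kᵢ−rᵢ+rᵢ₋₁})`, and the common part of the
exponent multisets of `G` and `G ⧸ ⟨g⟩` is exactly `{n₁, …, n_{t−s}}`. -/
theorem stmt19 {p : ℕ} (hp : p.Prime) (t s l : ℕ) (hs : 1 ≤ s) (hst : s ≤ t)
    (n k r : ℕ → ℕ)
    (hn : ∀ i < t - s, 0 < n i)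
    (hr0 : ∀ i < s, 0 < r i) (hrk : ∀ i < s, r i ≤ k i) (hrl : r (s - 1) = l)
    (hk : ∀ i, i + 1 < s → k i < k (i + 1))
    (hr : ∀ i, i + 1 < s → r i < r (i + 1))
    (hkr : ∀ i, i + 1 < s → k i - r i < k (i + 1) - r (i + 1)) :
    Nonempty ((((∀ i : Fin (t - s), ZMod (p ^ n i.1)) × (∀ i : Fin s, ZMod (p ^ k i.1))) ⧸
        AddSubgroup.zmultiples
          ((0, fun i : Fin s => ((p ^ (k i.1 - r i.1) : ℕ) : ZMod (p ^ k i.1))) :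
            (∀ i : Fin (t - s), ZMod (p ^ n i.1)) × (∀ i : Fin s, ZMod (p ^ k i.1)))) ≃+
      ((∀ i : Fin (t - s), ZMod (p ^ n i.1)) ×
        (∀ i : Fin s,
          ZMod (p ^ (if i.1 = 0 then k 0 - r 0 else k i.1 - r i.1 + r (i.1 - 1)))))) ∧
    ((Multiset.range (t - s)).map n + (Multiset.range s).map k) ∩
        ((Multiset.range (t - s)).map n +
          (((Multiset.range s).map
            (fun i => if i = 0 then k 0 - r 0 else k i - r i + r (i - 1))).filter
              (fun x => 0 < x))) =
      (Multiset.range (t - s)).map n := by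
  haveI := Fact.mk hp
  haveI hNZ : ∀ N : ℕ, NeZero (p ^ N) := fun N => ⟨pow_ne_zero _ hp.ne_zero⟩
  have hs0 : 0 < s := hs
  have hrmono : ∀ b, b < s → ∀ a, a ≤ b → r a ≤ r b := by
    intro b
    induction b with
    | zero =>
        intro _ a ha
        have h0 : a = 0 := by omega
        rw [h0]
    | succ b ih =>
        intro hb a ha
        rcases Nat.lt_or_ge a (b + 1) with h | h
        · exact le_trans (ih (by omega) a (by omega)) (hr b hb).le
        · have : a = b + 1 := by omega
          subst this; exact le_rfl
  have hkmono : ∀ b, b < s → ∀ a, a ≤ b → k a ≤ k b := by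
    intro b
    induction b with
    | zero =>
        intro _ a ha
        have h0 : a = 0 := by omega
        rw [h0]
    | succ b ih =>
        intro hb a ha
        rcases Nat.lt_or_ge a (b + 1) with h | h
        · exact le_trans (ih (by omega) a (by omega)) (hk b hb).le
        · have : a = b + 1 := by omega
          subst this; exact le_rfl
  constructor
  · -- the isomorphism
    obtain ⟨ψ, hψ0, hψs⟩ := psi_exists p hp s hs0 k r hr0 hrk hr hkr
    set A := ∀ i : Fin (t - s), ZMod (p ^ n i.1) with hA
    set H := ∀ i : Fin s, ZMod (p ^ k i.1) with hH
    set M := ∀ i : Fin s, ZMod (p ^ mm k r i.1) with hM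
    set gH : H := fun i : Fin s => ((p ^ (k i.1 - r i.1) : ℕ) : ZMod (p ^ k i.1)) with hgH
    set g : A × H := (0, gH) with hg
    set Ψ : A × H →+ A × M := (AddMonoidHom.id A).prodMap ψ with hΨ
    have hΨg : Ψ g = 0 := by
      rw [hΨ, hg]
      ext
      · simp
      · simp [hψ0]; rfl
    have hker : AddSubgroup.zmultiples g ≤ Ψ.ker := by
      intro x hx
      rw [AddSubgroup.mem_zmultiples_iff] at hx
      obtain ⟨z, rfl⟩ := hx
      rw [AddMonoidHom.mem_ker, map_zsmul, hΨg, smul_zero]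
    set Φ := QuotientAddGroup.lift _ Ψ hker with hΦ
    have hΨsurj : Function.Surjective Ψ := by
      rw [hΨ, AddMonoidHom.coe_prodMap]
      exact Function.Surjective.prodMap (fun a => ⟨a, rfl⟩) hψs
    have hΦsurj : Function.Surjective Φ := by
      intro c
      obtain ⟨x, hx⟩ := hΨsurj c
      exact ⟨QuotientAddGroup.mk x, by rw [hΦ, QuotientAddGroup.lift_mk]; exact hx⟩
    -- order of g
    have hl1 : 0 < l := hrl ▸ hr0 (s - 1) (by omega)
    have hsmul : ∀ c : ℕ, c • g =
        (0, fun i : Fin s => ((c * p ^ (k i.1 - r i.1) : ℕ) : ZMod (p ^ k i.1))) := by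
      intro c
      rw [hg]
      ext i
      · simp
      · show c • gH i = _
        rw [hgH]
        push_cast
        rw [nsmul_eq_mul]
    have horder : addOrderOf g = p ^ l := by
      obtain ⟨l', rfl⟩ : ∃ l', l = l' + 1 := ⟨l - 1, by omega⟩
      apply addOrderOf_eq_prime_pow
      · intro hcon
        rw [hsmul] at hcon
        have h2 := congrFun (congrArg Prod.snd hcon) ⟨s - 1, by omega⟩
        simp only [Prod.snd_zero, Pi.zero_apply] at h2
        rw [← pow_add, ZMod.natCast_eq_zero_iff] at h2
        have h3 := (Nat.pow_dvd_pow_iff_le_right hp.one_lt).mp h2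
        have h4 := hrk (s - 1) (by omega)
        omega
      · rw [hsmul]
        ext i
        · simp
        · show ((p ^ (l' + 1) * p ^ (k i.1 - r i.1) : ℕ) : ZMod (p ^ k i.1)) = 0
          rw [← pow_add, ZMod.natCast_eq_zero_iff]
          apply pow_dvd_pow
          have h5 : r i.1 ≤ r (s - 1) := hrmono (s - 1) (by omega) i.1 (by omega)
          have h6 := hrk i.1 i.2
          omega
    -- cardinalities
    have cardZ : ∀ (N : ℕ) (f : ℕ → ℕ),
        Nat.card (∀ i : Fin N, ZMod (p ^ f i.1)) = p ^ (∑ i ∈ Finset.range N, f i) := by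
      intro N f
      rw [Nat.card_pi]
      simp only [Nat.card_zmod]
      rw [Finset.prod_pow_eq_pow_sum, Fin.sum_univ_eq_sum_range]
    have hsum : ∀ u, u ≤ s → 0 < u →
        (∑ i ∈ Finset.range u, mm k r i) + r (u - 1) = ∑ i ∈ Finset.range u, k i := by
      intro u
      induction u with
      | zero => intro _ h; omega
      | succ u ih =>
          intro hu _
          rw [Nat.add_sub_cancel]
          rcases Nat.eq_zero_or_pos u with rfl | hu0
          · simp only [zero_add, Finset.sum_range_one]
            have h1 : mm k r 0 = k 0 - r 0 := by simp [mm]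
            have h2 := hrk 0 hs0
            omega
          · rw [Finset.sum_range_succ, Finset.sum_range_succ]
            have h3 : mm k r u = k u - r u + r (u - 1) := by
              unfold mm; rw [if_neg (by omega)]
            have h4 := ih (by omega) hu0
            have h5 := hrk u (by omega)
            omega
    have hkey : (∑ i ∈ Finset.range s, mm k r i) + l = ∑ i ∈ Finset.range s, k i := by
      have := hsum s le_rfl hs0
      rwa [hrl] at this
    haveI : Finite (A × H) := by
      rw [hA, hH]
      infer_instance
    have htot := AddSubgroup.card_eq_card_quotient_mul_card_addSubgroup (AddSubgroup.zmultiples g)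
    rw [Nat.card_zmultiples, horder] at htot
    have hG : Nat.card (A × H) = p ^ (∑ i ∈ Finset.range (t - s), n i) *
        p ^ (∑ i ∈ Finset.range s, k i) := by
      rw [Nat.card_prod, hA, hH, cardZ, cardZ]
    have hMc : Nat.card (A × M) = p ^ (∑ i ∈ Finset.range (t - s), n i) *
        p ^ (∑ i ∈ Finset.range s, mm k r i) := by
      rw [Nat.card_prod, hA, hM, cardZ, cardZ]
    have hQ : Nat.card ((A × H) ⧸ AddSubgroup.zmultiples g) = Nat.card (A × M) := by
      apply Nat.eq_of_mul_eq_mul_right (pow_pos hp.pos l)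
      rw [← htot, hG, hMc, ← pow_add, ← pow_add, ← pow_add]
      congr 1
      omega
    have hbij := (Nat.bijective_iff_surjective_and_card Φ).mpr ⟨hΦsurj, hQ⟩
    exact ⟨AddEquiv.ofBijective Φ hbij⟩
  · -- the multiset identity
    have hdis : Disjoint ((Multiset.range s).map k)
        ((((Multiset.range s).map
          (fun i => if i = 0 then k 0 - r 0 else k i - r i + r (i - 1))).filter
            (fun x => 0 < x))) := by
      rw [Multiset.disjoint_left]
      intro a ha hb
      rw [Multiset.mem_map] at ha
      obtain ⟨i, hi, rfl⟩ := ha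
      rw [Multiset.mem_range] at hi
      rw [Multiset.mem_filter, Multiset.mem_map] at hb
      obtain ⟨⟨j, hj, hji⟩, -⟩ := hb
      rw [Multiset.mem_range] at hj
      by_cases hj0 : j = 0
      · subst hj0
        rw [if_pos rfl] at hji
        have h1 := hr0 0 hs0
        have h2 := hrk 0 hs0
        have h3 := hkmono i hi 0 (by omega)
        omega
      · rw [if_neg hj0] at hji
        have h1 := hkr (j - 1) (by omega)
        have h2 := hr (j - 1) (by omega)
        rw [(by omega : j - 1 + 1 = j)] at h1 h2
        have h3 := hrk (j - 1) (by omega)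
        have h4 := hrk j hj
        rcases le_or_gt i (j - 1) with h | h
        · have h5 := hkmono (j - 1) (by omega) i h
          omega
        · have h5 := hkmono i hi j (by omega)
          omega
    rw [← Multiset.add_inter_distrib,
      Multiset.inter_eq_zero_iff_disjoint.mpr hdis, add_zero]
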